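/- Suppose E|X|⁴ < ∞ and δ_n → 0 is a sequence of positive constants such that √n δ_n is increasing and Σ_k δ_{2^k}^{-2} 2^{2k} P(|X| ≥ 2^{k/2} δ_{2^k}) < ∞. Let {x_ij} be a double array of independent random variables satisfying p^{-1}Σ_{i≤p} P(|x_ij| > x) ≤ K P(|X| > x) and n^{-1}Σ_{j≤n} P(|x_ij| > x) ≤ K P(|X| > x) for all x > 0 and some constant K, with y_n = p/n → y > 0. Define x_ijn = x_ij I(|x_ij| ≤ δ_n √n) and let Ŝ_n be the matrix n^{-1} X̂_n X̂_n* built from the truncated variables (X̂_n = (x_ijn)), while S_n = n^{-1} X_n X_n*. Then P(Ŝ_n ≠ S_n infinitely often) = 0. -/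

import Mathlib

open MeasureTheory ProbabilityTheory Filter Matrix Complex Topology
open scoped ENNReal

set_option maxHeartbeats 1000000 in
/-- Truncation step: if `x_ijn = x_ij I(|x_ij| ≤ δₙ√n)` and `Ŝₙ` is the sample covariance
matrix built from the truncated variables while `Sₙ` is built from the original ones, then
`P(Ŝₙ ≠ Sₙ i.o.) = 0`. -/
theorem truncation_does_not_matter
    {Ω : Type*} [MeasureSpace Ω] [IsProbabilityMeasure (ℙ : Measure Ω)]
    (p : ℕ → ℕ) (y : ℝ) (hy : 0 < y)
    (hyn : Tendsto (fun n => (p n : ℝ) / (n : ℝ)) atTop (𝓝 y))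
    -- the double array
    (x : ℕ → ℕ → Ω → ℂ)
    (hxmeas : ∀ i j, Measurable (x i j))
    (hxindep : iIndepFun (fun ij : ℕ × ℕ => x ij.1 ij.2) ℙ)
    -- tail domination by X₀ with E|X₀|⁴ < ∞
    (X₀ : Ω → ℝ) (hX₀meas : Measurable X₀)
    (hX₀4 : Integrable (fun ω => X₀ ω ^ 4) ℙ)
    (K : ℝ)
    (htail_row : ∀ n j, j < n → ∀ s : ℝ, 0 < s →
      (p n : ℝ)⁻¹ * ∑ i ∈ Finset.range (p n), (ℙ {ω | s < ‖x i j ω‖}).toReal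
        ≤ K * (ℙ {ω | s < |X₀ ω|}).toReal)
    (htail_col : ∀ n i, i < p n → ∀ s : ℝ, 0 < s →
      (n : ℝ)⁻¹ * ∑ j ∈ Finset.range n, (ℙ {ω | s < ‖x i j ω‖}).toReal
        ≤ K * (ℙ {ω | s < |X₀ ω|}).toReal)
    -- the truncation sequence δₙ
    (δ : ℕ → ℝ) (hδpos : ∀ n, 0 < δ n) (hδ0 : Tendsto δ atTop (𝓝 0))
    (hδmono : Monotone fun n : ℕ => Real.sqrt n * δ n)
    (hδsum : Summable fun k : ℕ =>
      ((δ (2 ^ k)) ^ 2)⁻¹ * (2 : ℝ) ^ (2 * k) *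
        (ℙ {ω | (2 : ℝ) ^ ((k : ℝ) / 2) * δ (2 ^ k) ≤ |X₀ ω|}).toReal)
    -- Sₙ and the truncated version Ŝₙ
    (S Shat : ∀ n : ℕ, Ω → Matrix (Fin (p n)) (Fin (p n)) ℂ)
    (hSdef : ∀ n ω, S n ω =
      ((n : ℂ))⁻¹ • ((Matrix.of fun (i : Fin (p n)) (j : Fin n) => x i.1 j.1 ω) *
        (Matrix.of fun (i : Fin (p n)) (j : Fin n) => x i.1 j.1 ω)ᴴ))
    (hShatdef : ∀ n ω, Shat n ω =
      ((n : ℂ))⁻¹ • ((Matrix.of fun (i : Fin (p n)) (j : Fin n) =>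
          if ‖x i.1 j.1 ω‖ ≤ δ n * Real.sqrt n then x i.1 j.1 ω else 0) *
        (Matrix.of fun (i : Fin (p n)) (j : Fin n) =>
          if ‖x i.1 j.1 ω‖ ≤ δ n * Real.sqrt n then x i.1 j.1 ω else 0)ᴴ)) :
    ℙ (Filter.limsup (fun n => {ω | Shat n ω ≠ S n ω}) atTop) = 0 := by
  classical
  set E : ℕ → Set Ω := fun n => {ω | Shat n ω ≠ S n ω} with hE
  -- Step 1: if all entries are small, the matrices agree
  have hEsub : ∀ n, E n ⊆ ⋃ j ∈ Finset.range n, ⋃ i ∈ Finset.range (p n),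
      {ω | δ n * Real.sqrt n < ‖x i j ω‖} := by
    intro n ω hω
    by_contra hc
    rw [hE] at hω
    simp only [Set.mem_setOf_eq] at hω
    apply hω
    have hall : ∀ i j : ℕ, i < p n → j < n →
        ‖x i j ω‖ ≤ δ n * Real.sqrt n := by
      intro i j hi hj
      by_contra hlt
      exact hc (Set.mem_iUnion₂.2 ⟨j, Finset.mem_range.2 hj,
        Set.mem_iUnion₂.2 ⟨i, Finset.mem_range.2 hi, not_le.1 hlt⟩⟩)
    rw [hShatdef, hSdef]
    have hM : (Matrix.of fun (i : Fin (p n)) (j : Fin n) =>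
        if ‖x i.1 j.1 ω‖ ≤ δ n * Real.sqrt n then x i.1 j.1 ω else 0)
        = (Matrix.of fun (i : Fin (p n)) (j : Fin n) => x i.1 j.1 ω) := by
      ext i j
      simp only [Matrix.of_apply]
      rw [if_pos (hall i.1 j.1 i.2 j.2)]
    rw [hM]
  -- Step 2: bounds on p n
  have hy1 : y / 2 < y := by linarith
  have hy2 : y < y + 1 := by linarith
  obtain ⟨N₁, hN₁⟩ := eventually_atTop.1 (hyn.eventually (Ioo_mem_nhds hy1 hy2))
  set N := max N₁ 1 with hN
  have hpb : ∀ n : ℕ, N ≤ n → y / 2 * n < (p n : ℝ) ∧ (p n : ℝ) < (y + 1) * n := by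
    intro n hn
    have hn1 : 1 ≤ n := le_trans (le_max_right _ _) hn
    have hn0 : (0 : ℝ) < n := by exact_mod_cast hn1
    obtain ⟨h1, h2⟩ := hN₁ n (le_trans (le_max_left _ _) hn)
    constructor
    · calc y / 2 * n < (p n : ℝ) / n * n := mul_lt_mul_of_pos_right h1 hn0
        _ = (p n : ℝ) := by field_simp
    · calc (p n : ℝ) = (p n : ℝ) / n * n := by field_simp
        _ < (y + 1) * n := mul_lt_mul_of_pos_right h2 hn0
  set c : ℕ := ⌈4 * (y + 1) / y⌉₊ with hcdef
  have hcge : 4 * (y + 1) / y ≤ (c : ℝ) := Nat.le_ceil _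
  have hc1 : 1 ≤ c := Nat.one_le_ceil_iff.2 (by positivity)
  have hyc : 2 * (y + 1) ≤ y / 2 * c := by
    have h := mul_le_mul_of_nonneg_left hcge (le_of_lt (half_pos hy))
    calc 2 * (y + 1) = y / 2 * (4 * (y + 1) / y) := by field_simp; ring
      _ ≤ y / 2 * c := h
  set m : ℕ → ℕ := fun k => c * 2 ^ (k + 1) with hm
  set K' : ℝ := max K 0 with hK'
  have hK'0 : 0 ≤ K' := le_max_right _ _
  set B : ℕ → Set Ω := fun k => ⋃ n ∈ Finset.Ico (2 ^ k) (2 ^ (k + 1)), E n with hB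
  set r' : ℕ → ℝ :=
    fun k => (ℙ {ω | (2 : ℝ) ^ ((k : ℝ) / 2) * δ (2 ^ k) ≤ |X₀ ω|}).toReal with hr'
  have hr'nonneg : ∀ k, 0 ≤ r' k := fun k => ENNReal.toReal_nonneg
  have hsqrt : ∀ k : ℕ, Real.sqrt (((2 ^ k : ℕ) : ℝ)) = (2 : ℝ) ^ ((k : ℝ) / 2) := by
    intro k
    have : ((2 ^ k : ℕ) : ℝ) = (2 : ℝ) ^ k := by push_cast; ring
    rw [this, Real.sqrt_eq_rpow, ← Real.rpow_natCast 2 k, ← Real.rpow_mul (by norm_num),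
      mul_one_div]
  -- Step 3: the key bound on ℙ (B k)
  have hBbound : ∀ k : ℕ, N ≤ 2 ^ k →
      (ℙ (B k)).toReal ≤ 4 * (y + 1) * c * K' * 2 ^ (2 * k) * r' k := by
    intro k hNk
    set T : ℝ := δ (2 ^ k) * Real.sqrt ((2 ^ k : ℕ) : ℝ) with hT
    have hTpos : 0 < T := by
      apply mul_pos (hδpos _)
      rw [hsqrt]
      positivity
    have h2k1 : (2 : ℕ) ^ k ≤ 2 ^ (k + 1) := Nat.pow_le_pow_right (by norm_num) (Nat.le_succ k)
    have hmk2 : 2 ^ (k + 1) ≤ m k := Nat.le_mul_of_pos_left _ hc1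
    have hmkN : N ≤ m k := le_trans hNk (le_trans h2k1 hmk2)
    obtain ⟨hml, hmu⟩ := hpb (m k) hmkN
    have hmcast : ((m k : ℕ) : ℝ) = (c : ℝ) * 2 ^ (k + 1) := by
      rw [hm]; push_cast; ring
    have hp0 : (0 : ℝ) < (p (m k) : ℝ) := by
      refine lt_trans ?_ hml
      rw [hmcast]
      have : (0:ℝ) < (c : ℝ) := by exact_mod_cast hc1
      positivity
    have hppos : 0 < p (m k) := by exact_mod_cast hp0
    -- p n ≤ p (m k) for n in the block
    have hple : ∀ n : ℕ, 2 ^ k ≤ n → n < 2 ^ (k + 1) → p n ≤ p (m k) := by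
      intro n h1 h2
      have hnN : N ≤ n := le_trans hNk h1
      have e1 := (hpb n hnN).2
      have e2 : (n : ℝ) < (2 : ℝ) ^ (k + 1) := by
        have : (n : ℝ) < ((2 ^ (k + 1) : ℕ) : ℝ) := by exact_mod_cast h2
        simpa [Nat.cast_pow] using this
      have e3 : y / 2 * ((c : ℝ) * 2 ^ (k + 1)) < (p (m k) : ℝ) := by
        rw [← hmcast]; exact hml
      have hpow : (0 : ℝ) < (2 : ℝ) ^ (k + 1) := by positivity
      have key : (p n : ℝ) < (p (m k) : ℝ) := by
        have i1 : (p n : ℝ) < (y + 1) * 2 ^ (k + 1) := by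
          calc (p n : ℝ) < (y + 1) * n := e1
            _ < (y + 1) * 2 ^ (k + 1) := by
                apply mul_lt_mul_of_pos_left e2 (by linarith)
        have i2 : (y + 1) * 2 ^ (k + 1) ≤ y / 2 * ((c : ℝ) * 2 ^ (k + 1)) := by
          have : (y + 1) ≤ y / 2 * c := by linarith
          calc (y + 1) * 2 ^ (k + 1) ≤ (y / 2 * c) * 2 ^ (k + 1) :=
                mul_le_mul_of_nonneg_right this (le_of_lt hpow)
            _ = y / 2 * ((c : ℝ) * 2 ^ (k + 1)) := by ring
        linarith
      exact_mod_cast key.le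
    -- block inclusion
    have hBsub : B k ⊆ ⋃ j ∈ Finset.range (2 ^ (k + 1)), ⋃ i ∈ Finset.range (p (m k)),
        {ω | T < ‖x i j ω‖} := by
      intro ω hω
      rw [hB] at hω
      obtain ⟨n, hn, hωn⟩ := Set.mem_iUnion₂.1 hω
      rw [Finset.mem_Ico] at hn
      obtain ⟨j, hj, hmem⟩ := Set.mem_iUnion₂.1 (hEsub n hωn)
      obtain ⟨i, hi, hmem⟩ := Set.mem_iUnion₂.1 hmem
      rw [Finset.mem_range] at hj hi
      have hTle : T ≤ δ n * Real.sqrt n := by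
        have := hδmono (show (2 : ℕ) ^ k ≤ n from hn.1)
        simp only at this
        rw [hT, mul_comm]
        linarith [this]
      refine Set.mem_iUnion₂.2 ⟨j, Finset.mem_range.2 (lt_of_lt_of_le (lt_of_lt_of_le hj hn.2.le) le_rfl), ?_⟩
      refine Set.mem_iUnion₂.2 ⟨i, Finset.mem_range.2 (lt_of_lt_of_le hi (hple n hn.1 hn.2)), ?_⟩
      exact lt_of_le_of_lt hTle hmem
    -- measure bound
    have h1 : ℙ (B k) ≤ ∑ j ∈ Finset.range (2 ^ (k + 1)),
        ∑ i ∈ Finset.range (p (m k)), ℙ {ω | T < ‖x i j ω‖} := by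
      refine (measure_mono hBsub).trans ?_
      refine (measure_biUnion_finset_le _ _).trans ?_
      exact Finset.sum_le_sum fun j _ => measure_biUnion_finset_le _ _
    have hne : (∑ j ∈ Finset.range (2 ^ (k + 1)),
        ∑ i ∈ Finset.range (p (m k)), ℙ {ω | T < ‖x i j ω‖}) ≠ ⊤ := by
      exact ENNReal.sum_ne_top.2 fun j _ =>
        ENNReal.sum_ne_top.2 fun i _ => measure_ne_top _ _
    have h2 : (ℙ (B k)).toReal ≤ ∑ j ∈ Finset.range (2 ^ (k + 1)),
        ∑ i ∈ Finset.range (p (m k)), (ℙ {ω | T < ‖x i j ω‖}).toReal := by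
      have := ENNReal.toReal_mono hne h1
      rwa [ENNReal.toReal_sum (fun j _ =>
          ENNReal.sum_ne_top.2 fun i _ => measure_ne_top _ _),
        Finset.sum_congr rfl (fun j _ => ENNReal.toReal_sum
          (fun i _ => (measure_lt_top _ _).ne))] at this
    set rT : ℝ := (ℙ {ω | T < |X₀ ω|}).toReal with hrT
    have hrT0 : 0 ≤ rT := ENNReal.toReal_nonneg
    have hrow : ∀ j : ℕ, j < 2 ^ (k + 1) →
        ∑ i ∈ Finset.range (p (m k)), (ℙ {ω | T < ‖x i j ω‖}).toReal
          ≤ (p (m k) : ℝ) * (K' * rT) := by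
      intro j hj
      have hjm : j < m k := lt_of_lt_of_le hj hmk2
      have h := htail_row (m k) j hjm T hTpos
      have hKK' : K * rT ≤ K' * rT := mul_le_mul_of_nonneg_right (le_max_left _ _) hrT0
      calc ∑ i ∈ Finset.range (p (m k)), (ℙ {ω | T < ‖x i j ω‖}).toReal
          = (p (m k) : ℝ) * ((p (m k) : ℝ)⁻¹ *
            ∑ i ∈ Finset.range (p (m k)), (ℙ {ω | T < ‖x i j ω‖}).toReal) := by
            field_simp
        _ ≤ (p (m k) : ℝ) * (K' * rT) := by
            apply mul_le_mul_of_nonneg_left _ hp0.le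
            exact h.trans hKK'
    have hK'rT : 0 ≤ K' * rT := mul_nonneg hK'0 hrT0
    have hrTr' : rT ≤ r' k := by
      rw [hrT, hr']
      apply ENNReal.toReal_mono (measure_ne_top _ _)
      apply measure_mono
      intro ω hω
      simp only [Set.mem_setOf_eq] at hω ⊢
      have : (2 : ℝ) ^ ((k : ℝ) / 2) * δ (2 ^ k) = T := by
        rw [hT, ← hsqrt k]; ring
      rw [this]
      exact hω.le
    have hcpos : (0 : ℝ) < (c : ℝ) := by exact_mod_cast hc1
    calc (ℙ (B k)).toReal
        ≤ ∑ j ∈ Finset.range (2 ^ (k + 1)),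
            ∑ i ∈ Finset.range (p (m k)), (ℙ {ω | T < ‖x i j ω‖}).toReal := h2
      _ ≤ ∑ j ∈ Finset.range (2 ^ (k + 1)), (p (m k) : ℝ) * (K' * rT) :=
          Finset.sum_le_sum fun j hj => hrow j (Finset.mem_range.1 hj)
      _ = (2 : ℝ) ^ (k + 1) * ((p (m k) : ℝ) * (K' * rT)) := by
          rw [Finset.sum_const, Finset.card_range, nsmul_eq_mul]
          push_cast
          ring
      _ ≤ (2 : ℝ) ^ (k + 1) * (((y + 1) * ((c : ℝ) * 2 ^ (k + 1))) * (K' * rT)) := by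
          apply mul_le_mul_of_nonneg_left _ (by positivity)
          apply mul_le_mul_of_nonneg_right _ hK'rT
          rw [← hmcast]
          exact hmu.le
      _ ≤ (2 : ℝ) ^ (k + 1) * (((y + 1) * ((c : ℝ) * 2 ^ (k + 1))) * (K' * r' k)) := by
          apply mul_le_mul_of_nonneg_left _ (by positivity)
          apply mul_le_mul_of_nonneg_left _ (by nlinarith [hcpos, pow_pos (show (0:ℝ) < 2 by norm_num) (k+1)])
          exact mul_le_mul_of_nonneg_left hrTr' hK'0
      _ = 4 * (y + 1) * c * K' * 2 ^ (2 * k) * r' k := by ring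
  -- Step 4: summability
  have t2 : Tendsto (fun k : ℕ => 2 ^ k) atTop atTop :=
    tendsto_atTop_mono (fun n => (Nat.lt_two_pow_self (n := n)).le) tendsto_id
  have e1 : ∀ᶠ k in atTop, N ≤ 2 ^ k := t2.eventually_ge_atTop N
  have e2 : ∀ᶠ k in atTop, δ (2 ^ k) ≤ 1 := by
    have := (hδ0.comp t2).eventually (Iio_mem_nhds (show (0:ℝ) < 1 by norm_num))
    filter_upwards [this] with k hk using le_of_lt hk
  obtain ⟨k₀, hk₀⟩ := eventually_atTop.1 (e1.and e2)
  have hC0 : 0 ≤ 4 * (y + 1) * (c : ℝ) * K' := by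
    apply mul_nonneg (mul_nonneg (by linarith) (Nat.cast_nonneg c)) hK'0
  have hsumReal : Summable fun k => (ℙ (B k)).toReal := by
    rw [← summable_nat_add_iff k₀]
    have hs : Summable fun k : ℕ => 4 * (y + 1) * (c : ℝ) * K' *
        (((δ (2 ^ (k + k₀))) ^ 2)⁻¹ * (2 : ℝ) ^ (2 * (k + k₀)) * r' (k + k₀)) :=
      (summable_nat_add_iff k₀).2 (hδsum.mul_left _)
    refine Summable.of_nonneg_of_le (fun k => ENNReal.toReal_nonneg) (fun k => ?_) hs
    obtain ⟨h1, h2⟩ := hk₀ (k + k₀) (Nat.le_add_left _ _)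
    refine (hBbound (k + k₀) h1).trans ?_
    have hδ2 : (δ (2 ^ (k + k₀))) ^ 2 ≤ 1 := by nlinarith [hδpos (2 ^ (k + k₀))]
    have hδ2pos : (0 : ℝ) < (δ (2 ^ (k + k₀))) ^ 2 := pow_pos (hδpos _) 2
    have hinv : (1 : ℝ) ≤ ((δ (2 ^ (k + k₀))) ^ 2)⁻¹ := (one_le_inv₀ hδ2pos).2 hδ2
    have ha : 0 ≤ 4 * (y + 1) * (c : ℝ) * K' * 2 ^ (2 * (k + k₀)) * r' (k + k₀) := by
      apply mul_nonneg (mul_nonneg hC0 (by positivity)) (hr'nonneg _)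
    calc 4 * (y + 1) * (c : ℝ) * K' * 2 ^ (2 * (k + k₀)) * r' (k + k₀)
        ≤ ((δ (2 ^ (k + k₀))) ^ 2)⁻¹ *
          (4 * (y + 1) * (c : ℝ) * K' * 2 ^ (2 * (k + k₀)) * r' (k + k₀)) :=
          le_mul_of_one_le_left ha hinv
      _ = 4 * (y + 1) * (c : ℝ) * K' *
          (((δ (2 ^ (k + k₀))) ^ 2)⁻¹ * (2 : ℝ) ^ (2 * (k + k₀)) * r' (k + k₀)) := by ring
  have htsum : (∑' k, ℙ (B k)) ≠ ⊤ := by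
    have heq : (∑' k, ℙ (B k)) = ENNReal.ofReal (∑' k, (ℙ (B k)).toReal) := by
      rw [ENNReal.ofReal_tsum_of_nonneg (fun k => ENNReal.toReal_nonneg) hsumReal]
      exact tsum_congr fun k => (ENNReal.ofReal_toReal (measure_ne_top _ _)).symm
    rw [heq]
    exact ENNReal.ofReal_ne_top
  have hBC : ℙ (limsup B atTop) = 0 := measure_limsup_atTop_eq_zero htsum
  -- Step 5: limsup E ⊆ limsup B
  have hsub : limsup E atTop ⊆ limsup B atTop := by
    intro ω hω
    rw [limsup_eq_iInf_iSup_of_nat] at hω ⊢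
    simp only [Set.iInf_eq_iInter, Set.iSup_eq_iUnion, Set.mem_iInter, Set.mem_iUnion] at hω ⊢
    intro kK
    obtain ⟨n, hn, hωn⟩ := hω (2 ^ kK)
    have hn0 : n ≠ 0 := by
      have : 1 ≤ n := le_trans (Nat.one_le_two_pow) hn
      omega
    refine ⟨Nat.log 2 n, Nat.le_log_of_pow_le (by norm_num) hn, ?_⟩
    refine Set.mem_iUnion₂.2 ⟨n, ?_, hωn⟩
    exact Finset.mem_Ico.2 ⟨Nat.pow_log_le_self 2 hn0, Nat.lt_pow_succ_log_self (by norm_num) n⟩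
  exact le_antisymm ((measure_mono hsub).trans hBC.le) zero_le
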